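/- Let f : E → ℝ be convex with finite minimum f⋆ attained, f* its conjugate, ξ < f*(0), and let (ξ_p, g_p) with ξ_p = f*(g_p) be the projection of (ξ, 0) onto epi f*. Define ξ' = ξ + ‖g_p‖²/(ξ_p - ξ). Then ξ ≤ ξ' ≤ f*(0), and ξ' = ξ if and only if g_p = 0. -/
import Mathlib


open scoped RealInnerProductSpace
open Filter

variable {E : Type*} [NormedAddCommGroup E] [InnerProductSpace ℝ E] [FiniteDimensional ℝ E]

/-- Fenchel conjugate `f*(g) = sup_x (g·x - f x)` (real-valued supremum). -/
noncomputable def conj (f : E → ℝ) (g : E) : ℝ := ⨆ x, (⟪g, x⟫ - f x)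

/-- Subdifferential of a finite convex function. -/
def subdiff (f : E → ℝ) (x : E) : Set E := {g | ∀ y, f y - f x ≥ ⟪g, y - x⟫}

/-- Epigraph of the conjugate function: `{(μ, g) : μ ≥ f*(g)}` (including the
domain condition, correct even where `f* = +∞`). -/
def epiConj (f : E → ℝ) : Set (ℝ × E) := {p | ∀ x, ⟪p.2, x⟫ - f x ≤ p.1}

/-- Subdifferential of the conjugate `f*` at `g₀`: `x` with
`f*(g) ≥ f*(g₀) + x·(g - g₀)` for all `g` (stated via upper bounds `μ ≥ f*(g)`). -/
def subdiffConj (f : E → ℝ) (g₀ : E) : Set E :=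
  {x | ∀ p ∈ epiConj f, p.1 - conj f g₀ ≥ ⟪x, p.2 - g₀⟫}

/-- Directional derivative of the conjugate: `∂f*(g₀; d) = sup_{x ∈ ∂f*(g₀)} x·d`. -/
noncomputable def dirDConj (f : E → ℝ) (g₀ d : E) : ℝ :=
  sSup ((fun x => ⟪x, d⟫) '' subdiffConj f g₀)

/-- Directional derivative of a finite convex function `h`:
`∂h(g; d) = sup_{x ∈ ∂h(g)} x·d`. -/
noncomputable def dirD (h : E → ℝ) (g d : E) : ℝ :=
  sSup ((fun x => ⟪x, d⟫) '' subdiff h g)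

/-- the update ξ' = ξ + ‖g_p‖²/(ξ_p − ξ) satisfies
ξ ≤ ξ' ≤ f*(0), with ξ' = ξ iff g_p = 0. -/
theorem update_monotone_bounded
    (f : E → ℝ) (hf : ConvexOn ℝ Set.univ f) (hmin : ∃ xs : E, ∀ y, f xs ≤ f y)
    (ξ ξp : ℝ) (gp : E) (hξ : ξ < conj f 0)
    (hepi : (ξp, gp) ∈ epiConj f) (hval : ξp = conj f gp) (hlt : ξ < ξp)
    (hproj : ∀ p ∈ epiConj f,
      (ξp - ξ) ^ 2 + ‖gp‖ ^ 2 ≤ (p.1 - ξ) ^ 2 + ‖p.2‖ ^ 2) :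
    ξ ≤ ξ + ‖gp‖ ^ 2 / (ξp - ξ) ∧ ξ + ‖gp‖ ^ 2 / (ξp - ξ) ≤ conj f 0 ∧
      (ξ + ‖gp‖ ^ 2 / (ξp - ξ) = ξ ↔ gp = 0) := by
  obtain ⟨xs, hxs⟩ := hmin
  have hA : (0:ℝ) < ξp - ξ := by linarith
  have hG : (0:ℝ) ≤ ‖gp‖ ^ 2 := sq_nonneg _
  have hbdd : BddAbove (Set.range fun x => ⟪(0:E), x⟫ - f x) := by
    refine ⟨-f xs, ?_⟩
    rintro _ ⟨x, rfl⟩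
    simp only [inner_zero_left, zero_sub]
    linarith [hxs x]
  have hc : ∀ x, -f x ≤ conj f 0 := by
    intro x
    refine le_trans (le_of_eq ?_) (le_ciSup hbdd x)
    simp [inner_zero_left]
  set c := conj f 0 with hcdef
  have hmem : ∀ t : ℝ, 0 ≤ t → t ≤ 1 →
      ((1-t)*ξp + t*c, (1-t) • gp) ∈ epiConj f := by
    intro t ht0 ht1 x
    have h1 := hepi x
    have h2 := hc x
    simp only [epiConj, Set.mem_setOf_eq] at h1 ⊢
    rw [real_inner_smul_left]
    nlinarith [mul_nonneg (by linarith : (0:ℝ) ≤ 1 - t) (by linarith : (0:ℝ) ≤ ξp - (⟪gp, x⟫ - f x)),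
      mul_nonneg ht0 (by linarith : (0:ℝ) ≤ c + f x)]
  have key : ‖gp‖ ^ 2 ≤ (ξp - ξ) * (c - ξp) := by
    by_contra hcon
    push_neg at hcon
    set A := ξp - ξ with hAdef
    set B := c - ξp with hBdef
    set G := ‖gp‖ ^ 2 with hGdef
    have hq : ∀ t : ℝ, 0 < t → t ≤ 1 → 0 ≤ 2*(A*B - G) + t*(B^2 + G) := by
      intro t ht0 ht1
      have hm := hproj _ (hmem t ht0.le ht1)
      simp only at hm
      have hn : ‖(1-t) • gp‖ ^ 2 = (1-t)^2 * G := by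
        rw [norm_smul, mul_pow, hGdef, Real.norm_eq_abs, sq_abs]
      rw [hn] at hm
      have hrw : (1-t)*ξp + t*c - ξ = A + t*B := by rw [hAdef, hBdef]; ring
      rw [hrw] at hm
      have h0 : 0 ≤ 2*t*(A*B - G) + t^2*(B^2 + G) := by nlinarith [hm]
      nlinarith [mul_pos ht0 ht0]
    set ε := G - A*B with hε
    have hε0 : 0 < ε := by simp only [hε]; linarith
    have hden : (0:ℝ) < B^2 + G + 1 := by nlinarith [sq_nonneg B, hG]
    set t := min 1 (ε/(B^2+G+1)) with htdef
    have ht0 : 0 < t := lt_min one_pos (div_pos hε0 hden)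
    have ht1 : t ≤ 1 := min_le_left _ _
    have hqt := hq t ht0 ht1
    have htle : t ≤ ε/(B^2+G+1) := min_le_right _ _
    have htle' : t * (B^2+G+1) ≤ ε := by
      rw [← le_div_iff₀ hden]; exact htle
    nlinarith [hqt, htle', ht0]
  refine ⟨by have := div_nonneg hG hA.le; linarith, ?_, ?_⟩
  · have h1 : ‖gp‖ ^ 2 / (ξp - ξ) ≤ c - ξp := by
      rw [div_le_iff₀ hA]; nlinarith [key]
    linarith
  · constructor
    · intro h
      have h2 : ‖gp‖ ^ 2 / (ξp - ξ) = 0 := by linarith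
      have h3 : ‖gp‖ ^ 2 = 0 := by
        rcases div_eq_zero_iff.mp h2 with h | h
        · exact h
        · exact absurd h (by intro hh; linarith)
      exact norm_eq_zero.mp (pow_eq_zero_iff two_ne_zero |>.mp h3)
    · intro h
      simp [h]
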